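/- Let φ : A → B be a non-expansive homomorphism of seminormed commutative rings. Then: (i) the Kähler seminorm ‖·‖_Ω is a B-module seminorm on Ω_{B/A} for which the universal derivation d : B → Ω_{B/A} is non-expansive, and every B-module seminorm on Ω_{B/A} making d non-expansive is pointwise dominated by ‖·‖_Ω; (ii) for every seminormed B-module M, composition with d gives a bijection between non-expansive B-linear maps Ω_{B/A} → M and non-expansive A-derivations B → M. -/

import Mathlib

open scoped NNReal TensorProduct

universe u

/-- A (nonarchimedean) seminorm on an additive group. -/
def IsGroupSeminorm {M : Type*} [AddCommGroup M] (f : M → ℝ≥0) : Prop :=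
  f 0 = 0 ∧ ∀ x y : M, f (x - y) ≤ max (f x) (f y)

/-- A seminorm on a commutative ring. -/
def IsRingSeminorm {A : Type*} [CommRing A] (f : A → ℝ≥0) : Prop :=
  IsGroupSeminorm f ∧ f 1 = 1 ∧ ∀ x y : A, f (x * y) ≤ f x * f y

/-- A seminorm on a module over a seminormed ring. -/
def IsModuleSeminorm {A M : Type*} [CommRing A] [AddCommGroup M] [Module A M]
    (fA : A → ℝ≥0) (fM : M → ℝ≥0) : Prop :=
  IsGroupSeminorm fM ∧ ∀ (a : A) (m : M), fM (a • m) ≤ fA a * fM m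

/-- The Kähler seminorm on `Ω[B⁄A]` induced by a seminorm `vB` on `B`. -/
noncomputable def kahlerSeminorm (A B : Type*) [CommRing A] [CommRing B] [Algebra A B]
    (vB : B → ℝ≥0) (x : Ω[B⁄A]) : ℝ≥0 :=
  sInf { r | ∃ (n : ℕ) (c b : Fin n → B),
    x = ∑ i, c i • KaehlerDifferential.D A B (b i) ∧
    r = Finset.univ.sup fun i => vB (c i) * vB (b i) }

section Helpers

variable {A B : Type*} [CommRing A] [CommRing B] [Algebra A B]

lemma IsGroupSeminorm.neg_le {M : Type*} [AddCommGroup M] {f : M → ℝ≥0}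
    (hf : IsGroupSeminorm f) (x : M) : f (-x) ≤ f x := by
  have h := hf.2 0 x
  rw [zero_sub, hf.1] at h
  simpa using h

lemma IsGroupSeminorm.add_le {M : Type*} [AddCommGroup M] {f : M → ℝ≥0}
    (hf : IsGroupSeminorm f) (x y : M) : f (x + y) ≤ max (f x) (f y) := by
  have h := hf.2 x (-y)
  rw [sub_neg_eq_add] at h
  exact h.trans (max_le_max le_rfl (hf.neg_le y))

lemma IsGroupSeminorm.sum_le {M ι : Type*} [AddCommGroup M] {f : M → ℝ≥0}
    (hf : IsGroupSeminorm f) (s : Finset ι) (g : ι → M) :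
    f (∑ i ∈ s, g i) ≤ s.sup fun i => f (g i) := by
  classical
  induction s using Finset.cons_induction with
  | empty => simp [hf.1]
  | cons a s ha ih =>
    rw [Finset.sum_cons, Finset.sup_cons]
    exact (hf.add_le _ _).trans (max_le_max le_rfl ih)

lemma ks_le (vB : B → ℝ≥0) {x : Ω[B⁄A]} {n : ℕ} {c b : Fin n → B}
    (h : x = ∑ i, c i • KaehlerDifferential.D A B (b i)) :
    kahlerSeminorm A B vB x ≤ Finset.univ.sup fun i => vB (c i) * vB (b i) :=
  csInf_le (OrderBot.bddBelow _) ⟨n, c, b, h, rfl⟩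

lemma ks_rep (x : Ω[B⁄A]) :
    ∃ (n : ℕ) (c b : Fin n → B),
      x = ∑ i, c i • KaehlerDifferential.D A B (b i) := by
  have hx : x ∈ Submodule.span B (Set.range (KaehlerDifferential.D A B)) := by
    rw [KaehlerDifferential.span_range_derivation]; trivial
  rw [Submodule.mem_span_set'] at hx
  obtain ⟨n, f, g, hfg⟩ := hx
  choose b hb using fun i : Fin n => (g i).2
  exact ⟨n, f, b, by rw [← hfg]; exact Finset.sum_congr rfl fun i _ => by rw [hb i]⟩

lemma ks_set_nonempty (vB : B → ℝ≥0) (x : Ω[B⁄A]) :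
    Set.Nonempty { r | ∃ (n : ℕ) (c b : Fin n → B),
      x = ∑ i, c i • KaehlerDifferential.D A B (b i) ∧
      r = Finset.univ.sup fun i => vB (c i) * vB (b i) } := by
  obtain ⟨n, c, b, h⟩ := ks_rep x
  exact ⟨_, n, c, b, h, rfl⟩

lemma ks_exists_lt (vB : B → ℝ≥0) {x : Ω[B⁄A]} {t : ℝ≥0}
    (h : kahlerSeminorm A B vB x < t) :
    ∃ (n : ℕ) (c b : Fin n → B),
      x = ∑ i, c i • KaehlerDifferential.D A B (b i) ∧
      (Finset.univ.sup fun i => vB (c i) * vB (b i)) < t := by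
  obtain ⟨r, ⟨n, c, b, hx, hr⟩, hrt⟩ := exists_lt_of_csInf_lt (ks_set_nonempty vB x) h
  exact ⟨n, c, b, hx, hr ▸ hrt⟩

lemma ks_le_of_rep (vB : B → ℝ≥0) {w : Ω[B⁄A] → ℝ≥0} {x : Ω[B⁄A]}
    (h : ∀ (n : ℕ) (c b : Fin n → B),
      x = ∑ i, c i • KaehlerDifferential.D A B (b i) →
      w x ≤ Finset.univ.sup fun i => vB (c i) * vB (b i)) :
    w x ≤ kahlerSeminorm A B vB x :=
  le_csInf (ks_set_nonempty vB x) (by rintro r ⟨n, c, b, hx, rfl⟩; exact h n c b hx)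

end Helpers

/-- Universal property of the Kähler seminorm: (i) it is a `B`-module seminorm making the
universal derivation `d : B → Ω_{B/A}` non-expansive, and is maximal among such seminorms;
(ii) `d` is the universal non-expansive `A`-derivation of `B` with values in seminormed
`B`-modules: every non-expansive `A`-derivation `B → M` factors uniquely through a
non-expansive `B`-linear map `Ω_{B/A} → M`. -/
theorem kahlerSeminorm_universal_property
    {A B : Type*} [CommRing A] [CommRing B] [Algebra A B]
    (vA : A → ℝ≥0) (vB : B → ℝ≥0)
    (hA : IsRingSeminorm vA) (hB : IsRingSeminorm vB)
    (hnonexp : ∀ a : A, vB (algebraMap A B a) ≤ vA a) :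
    -- (i)
    (IsModuleSeminorm vB (kahlerSeminorm A B vB) ∧
      (∀ b : B, kahlerSeminorm A B vB (KaehlerDifferential.D A B b) ≤ vB b) ∧
      (∀ w : Ω[B⁄A] → ℝ≥0, IsModuleSeminorm vB w →
        (∀ b : B, w (KaehlerDifferential.D A B b) ≤ vB b) →
        ∀ x, w x ≤ kahlerSeminorm A B vB x)) ∧
    -- (ii)
    (∀ (M : Type u) [AddCommGroup M] [Module A M] [Module B M] [IsScalarTower A B M]
      (vM : M → ℝ≥0), IsModuleSeminorm vB vM →
      ∀ D : Derivation A B M, (∀ b : B, vM (D b) ≤ vB b) →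
      ∃! g : Ω[B⁄A] →ₗ[B] M,
        (∀ x, vM (g x) ≤ kahlerSeminorm A B vB x) ∧
        (∀ b : B, g (KaehlerDifferential.D A B b) = D b)) := by
  classical
  have hgrp : IsGroupSeminorm (kahlerSeminorm A B vB) := by
    constructor
    · refine le_antisymm ?_ (zero_le)
      have := ks_le vB (x := (0 : Ω[B⁄A])) (n := 0) (c := Fin.elim0) (b := Fin.elim0) (by simp)
      simpa using this
    · intro x y
      refine le_of_forall_gt_imp_ge_of_dense fun t ht => ?_
      obtain ⟨n, c, b, hx, hxn⟩ := ks_exists_lt vB (lt_of_le_of_lt (le_max_left _ _) ht)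
      obtain ⟨m, c', b', hy, hym⟩ := ks_exists_lt vB (lt_of_le_of_lt (le_max_right _ _) ht)
      have hrep : x - y = ∑ i : Fin (n + m),
          (Fin.append c (fun j => -(c' j))) i •
            KaehlerDifferential.D A B ((Fin.append b b') i) := by
        rw [Fin.sum_univ_add]
        simp only [Fin.append_left, Fin.append_right, neg_smul]
        rw [Finset.sum_neg_distrib, ← hx, ← hy, sub_eq_add_neg]
      refine (ks_le vB hrep).trans (Finset.sup_le fun i _ => ?_)
      cases i using Fin.addCases with
      | left i =>
        simp only [Fin.append_left]
        exact ((Finset.le_sup (Finset.mem_univ i)).trans_lt hxn).le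
      | right j =>
        simp only [Fin.append_right]
        refine le_trans (mul_le_mul_left (hB.1.neg_le _) _) ?_
        exact ((Finset.le_sup (Finset.mem_univ j)).trans_lt hym).le
  have hsmul : ∀ (a : B) (x : Ω[B⁄A]),
      kahlerSeminorm A B vB (a • x) ≤ vB a * kahlerSeminorm A B vB x := by
    intro a x
    have key : ∀ (n : ℕ) (c b : Fin n → B),
        x = ∑ i, c i • KaehlerDifferential.D A B (b i) →
        kahlerSeminorm A B vB (a • x) ≤
          vB a * Finset.univ.sup fun i => vB (c i) * vB (b i) := by
      intro n c b hx
      have hrep : a • x = ∑ i, (a * c i) • KaehlerDifferential.D A B (b i) := by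
        rw [hx, Finset.smul_sum]
        exact Finset.sum_congr rfl fun i _ => by rw [smul_smul]
      refine (ks_le vB hrep).trans (Finset.sup_le fun i _ => ?_)
      calc vB (a * c i) * vB (b i) ≤ (vB a * vB (c i)) * vB (b i) :=
            mul_le_mul_left (hB.2.2 a (c i)) _
        _ = vB a * (vB (c i) * vB (b i)) := mul_assoc _ _ _
        _ ≤ vB a * Finset.univ.sup (fun i => vB (c i) * vB (b i)) :=
            mul_le_mul_right (Finset.le_sup (f := fun i => vB (c i) * vB (b i)) (Finset.mem_univ i)) _
    refine le_of_forall_gt_imp_ge_of_dense fun t ht => ?_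
    rcases eq_or_ne (vB a) 0 with h0 | h0
    · obtain ⟨n, c, b, hx⟩ := ks_rep x
      have h := key n c b hx
      rw [h0, zero_mul] at h
      exact h.trans (zero_le)
    · have hlt : kahlerSeminorm A B vB x < t / vB a := (lt_div_iff₀' (pos_iff_ne_zero.mpr h0)).mpr ht
      obtain ⟨n, c, b, hx, hsup⟩ := ks_exists_lt vB hlt
      exact (key n c b hx).trans ((lt_div_iff₀' (pos_iff_ne_zero.mpr h0)).mp hsup).le
  have hd : ∀ b : B, kahlerSeminorm A B vB (KaehlerDifferential.D A B b) ≤ vB b := by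
    intro b
    have hrep : KaehlerDifferential.D A B b =
        ∑ _i : Fin 1, (1 : B) • KaehlerDifferential.D A B b := by simp
    have h := ks_le vB (c := fun _ : Fin 1 => (1 : B)) (b := fun _ => b) hrep
    simpa [hB.2.1] using h
  have hmax : ∀ w : Ω[B⁄A] → ℝ≥0, IsModuleSeminorm vB w →
      (∀ b : B, w (KaehlerDifferential.D A B b) ≤ vB b) →
      ∀ x, w x ≤ kahlerSeminorm A B vB x := by
    intro w hw hwd x
    refine ks_le_of_rep vB fun n c b hx => ?_
    rw [hx]
    refine (hw.1.sum_le _ _).trans (Finset.sup_mono_fun fun i _ => ?_)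
    exact (hw.2 (c i) _).trans (mul_le_mul_right (hwd (b i)) _)
  refine ⟨⟨⟨hgrp, hsmul⟩, hd, hmax⟩, ?_⟩
  intro M _ _ _ _ vM hM D hD
  refine ⟨D.liftKaehlerDifferential,
    ⟨?_, fun b => D.liftKaehlerDifferential_comp_D b⟩, ?_⟩
  · intro x
    refine hmax (fun y => vM (D.liftKaehlerDifferential y)) ⟨⟨?_, ?_⟩, ?_⟩ ?_ x
    · simp only [map_zero]; exact hM.1.1
    · intro u v; dsimp only; rw [map_sub]; exact hM.1.2 _ _
    · intro a m; dsimp only; rw [map_smul]; exact hM.2 _ _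
    · intro b; rw [D.liftKaehlerDifferential_comp_D]; exact hD b
  · rintro g ⟨-, hg⟩
    refine LinearMap.ext_on (KaehlerDifferential.span_range_derivation A B) ?_
    rintro _ ⟨b, rfl⟩
    rw [hg, D.liftKaehlerDifferential_comp_D]
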